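/- arXiv:gr-qc/0004018 — 2 statements merged into one kernel-verified Lean document; each statement's English description precedes it below -/
import Mathlib

section
/- Let F be a nonzero complex self-dual 2-form on a 4-dimensional Lorentzian vector space with F² := F_{αβ}F^{αβ} ≠ 0, and set f ∈ ℂ with f² = -F²/4. Then the real eigenvalue problem F_{αβ} V^β ∝ V_α (separately for real and imaginary parts of F acting on real vectors V) has exactly two real null eigendirections k and l, with F_{αβ} k^β = f k_α and F_{αβ} l^β = -f l_α, and k, l can be normalized so that g(k,l) = -1. -/
noncomputable section
open scoped BigOperators

/-- The Minkowski metric diag(-1,1,1,1) (in an orthonormal basis of the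
Lorentzian vector space), ℂ-valued; it coincides with its inverse. -/
def gmink : Fin 4 → Fin 4 → ℂ := fun μ ν => if μ = ν then (if μ = 0 then -1 else 1) else 0

/-- The real Minkowski metric diag(-1,1,1,1). -/
def gminkR : Fin 4 → Fin 4 → ℝ := fun μ ν => if μ = ν then (if μ = 0 then -1 else 1) else 0

/-- The volume form η_{αβγδ}: the Levi-Civita alternating symbol with η_{0123} = 1. -/
def eps4 (a b c d : Fin 4) : ℝ :=
  ∑ σ : Equiv.Perm (Fin 4),
    if σ 0 = a ∧ σ 1 = b ∧ σ 2 = c ∧ σ 3 = d then ((Equiv.Perm.sign σ : ℤ) : ℝ) else 0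

/-- Raise both indices of a complex 2-form with the (inverse) metric. -/
def raise2 (F : Fin 4 → Fin 4 → ℂ) (α β : Fin 4) : ℂ :=
  ∑ μ, ∑ ν, gmink α μ * gmink β ν * F μ ν

/-- Hodge dual of a complex 2-form: (B*)_{αβ} = (1/2) η_{αβγδ} B^{γδ}. -/
def hodge (F : Fin 4 → Fin 4 → ℂ) (α β : Fin 4) : ℂ :=
  (1/2) * ∑ γ, ∑ δ, ((eps4 α β γ δ : ℝ) : ℂ) * raise2 F γ δ

/-- A self-dual complex 2-form: antisymmetric with F* = -iF. -/
def IsSelfDual (F : Fin 4 → Fin 4 → ℂ) : Prop :=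
  (∀ α β, F α β = -F β α) ∧ ∀ α β, hodge F α β = -Complex.I * F α β

/-- The contraction F_{αβ} G^{αβ} of two 2-forms. -/
def form2dot (F G : Fin 4 → Fin 4 → ℂ) : ℂ := ∑ α, ∑ β, F α β * raise2 G α β

/-- Scalar product of real vectors. -/
def ipR (u v : Fin 4 → ℝ) : ℝ := ∑ α, ∑ β, gminkR α β * u α * v β

/-- Lower the index of a real vector. -/
def lowR (v : Fin 4 → ℝ) (α : Fin 4) : ℝ := ∑ β, gminkR α β * v β

def epsZ (a b c d : Fin 4) : ℤ :=
  ∑ σ : Equiv.Perm (Fin 4),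
    if σ 0 = a ∧ σ 1 = b ∧ σ 2 = c ∧ σ 3 = d then ((Equiv.Perm.sign σ : ℤ)) else 0

lemma eps4_cast (a b c d : Fin 4) : eps4 a b c d = ((epsZ a b c d : ℤ) : ℝ) := by
  simp [eps4, epsZ]

lemma epsZval : ∀ a b c d : Fin 4, epsZ a b c d =
    (((b:ℤ)-a)*((c:ℤ)-a)*((d:ℤ)-a)*((c:ℤ)-b)*((d:ℤ)-b)*((d:ℤ)-c))/12 := by decide

lemma lowR0 (v : Fin 4 → ℝ) : lowR v 0 = -v 0 := by
  simp (config := { decide := true }) [lowR, gminkR, Fin.sum_univ_four]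
lemma lowR1 (v : Fin 4 → ℝ) : lowR v 1 = v 1 := by
  simp (config := { decide := true }) [lowR, gminkR, Fin.sum_univ_four]
lemma lowR2 (v : Fin 4 → ℝ) : lowR v 2 = v 2 := by
  simp (config := { decide := true }) [lowR, gminkR, Fin.sum_univ_four]
lemma lowR3 (v : Fin 4 → ℝ) : lowR v 3 = v 3 := by
  simp (config := { decide := true }) [lowR, gminkR, Fin.sum_univ_four]

lemma ipR_eq (u v : Fin 4 → ℝ) : ipR u v = -(u 0 * v 0) + u 1 * v 1 + u 2 * v 2 + u 3 * v 3 := by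
  simp (config := { decide := true }) [ipR, gminkR, Fin.sum_univ_four]

lemma eigK0 (a1 a2 a3 b1 b2 b3 p q : ℝ) (h1 : p*p - q*q = (a1*a1+a2*a2+a3*a3) - (b1*b1+b2*b2+b3*b3)) (h2 : p*q = a1*b1+a2*b2+a3*b3) : ((a1:ℂ)+(b1:ℂ)*Complex.I) * (((p*a1+q*b1+(a2*b3-a3*b2)) : ℝ) : ℂ) + ((a2:ℂ)+(b2:ℂ)*Complex.I) * (((p*a2+q*b2+(a3*b1-a1*b3)) : ℝ) : ℂ) + ((a3:ℂ)+(b3:ℂ)*Complex.I) * (((p*a3+q*b3+(a1*b2-a2*b1)) : ℝ) : ℂ) = ((p:ℂ)+(q:ℂ)*Complex.I) * (((-(-(p*p+(b1*b1+b2*b2+b3*b3)))) : ℝ) : ℂ) := by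
  rw [Complex.ext_iff]
  constructor
  · push_cast
    simp only [Complex.add_re, Complex.add_im, Complex.sub_re, Complex.sub_im, Complex.mul_re, Complex.mul_im, Complex.neg_re, Complex.neg_im, Complex.I_re, Complex.I_im, Complex.ofReal_re, Complex.ofReal_im, Complex.zero_re, Complex.zero_im]
    linear_combination (-p)*h1 + (-q)*h2
  · push_cast
    simp only [Complex.add_re, Complex.add_im, Complex.sub_re, Complex.sub_im, Complex.mul_re, Complex.mul_im, Complex.neg_re, Complex.neg_im, Complex.I_re, Complex.I_im, Complex.ofReal_re, Complex.ofReal_im, Complex.zero_re, Complex.zero_im]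
    linear_combination (-p)*h2

lemma eigK1 (a1 a2 a3 b1 b2 b3 p q : ℝ) (h1 : p*p - q*q = (a1*a1+a2*a2+a3*a3) - (b1*b1+b2*b2+b3*b3)) (h2 : p*q = a1*b1+a2*b2+a3*b3) : (-((a1:ℂ)+(b1:ℂ)*Complex.I)) * (((-(p*p+(b1*b1+b2*b2+b3*b3))) : ℝ) : ℂ) + (-Complex.I*((a3:ℂ)+(b3:ℂ)*Complex.I)) * (((p*a2+q*b2+(a3*b1-a1*b3)) : ℝ) : ℂ) + (Complex.I*((a2:ℂ)+(b2:ℂ)*Complex.I)) * (((p*a3+q*b3+(a1*b2-a2*b1)) : ℝ) : ℂ) = ((p:ℂ)+(q:ℂ)*Complex.I) * (((p*a1+q*b1+(a2*b3-a3*b2)) : ℝ) : ℂ) := by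
  rw [Complex.ext_iff]
  constructor
  · push_cast
    simp only [Complex.add_re, Complex.add_im, Complex.sub_re, Complex.sub_im, Complex.mul_re, Complex.mul_im, Complex.neg_re, Complex.neg_im, Complex.I_re, Complex.I_im, Complex.ofReal_re, Complex.ofReal_im, Complex.zero_re, Complex.zero_im]
    linear_combination (-(b1))*h2
  · push_cast
    simp only [Complex.add_re, Complex.add_im, Complex.sub_re, Complex.sub_im, Complex.mul_re, Complex.mul_im, Complex.neg_re, Complex.neg_im, Complex.I_re, Complex.I_im, Complex.ofReal_re, Complex.ofReal_im, Complex.zero_re, Complex.zero_im]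
    linear_combination (b1)*h1 + (-(a1))*h2

lemma eigK2 (a1 a2 a3 b1 b2 b3 p q : ℝ) (h1 : p*p - q*q = (a1*a1+a2*a2+a3*a3) - (b1*b1+b2*b2+b3*b3)) (h2 : p*q = a1*b1+a2*b2+a3*b3) : (-((a2:ℂ)+(b2:ℂ)*Complex.I)) * (((-(p*p+(b1*b1+b2*b2+b3*b3))) : ℝ) : ℂ) + (Complex.I*((a3:ℂ)+(b3:ℂ)*Complex.I)) * (((p*a1+q*b1+(a2*b3-a3*b2)) : ℝ) : ℂ) + (-Complex.I*((a1:ℂ)+(b1:ℂ)*Complex.I)) * (((p*a3+q*b3+(a1*b2-a2*b1)) : ℝ) : ℂ) = ((p:ℂ)+(q:ℂ)*Complex.I) * (((p*a2+q*b2+(a3*b1-a1*b3)) : ℝ) : ℂ) := by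
  rw [Complex.ext_iff]
  constructor
  · push_cast
    simp only [Complex.add_re, Complex.add_im, Complex.sub_re, Complex.sub_im, Complex.mul_re, Complex.mul_im, Complex.neg_re, Complex.neg_im, Complex.I_re, Complex.I_im, Complex.ofReal_re, Complex.ofReal_im, Complex.zero_re, Complex.zero_im]
    linear_combination (-(b2))*h2
  · push_cast
    simp only [Complex.add_re, Complex.add_im, Complex.sub_re, Complex.sub_im, Complex.mul_re, Complex.mul_im, Complex.neg_re, Complex.neg_im, Complex.I_re, Complex.I_im, Complex.ofReal_re, Complex.ofReal_im, Complex.zero_re, Complex.zero_im]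
    linear_combination (b2)*h1 + (-(a2))*h2

lemma eigK3 (a1 a2 a3 b1 b2 b3 p q : ℝ) (h1 : p*p - q*q = (a1*a1+a2*a2+a3*a3) - (b1*b1+b2*b2+b3*b3)) (h2 : p*q = a1*b1+a2*b2+a3*b3) : (-((a3:ℂ)+(b3:ℂ)*Complex.I)) * (((-(p*p+(b1*b1+b2*b2+b3*b3))) : ℝ) : ℂ) + (-Complex.I*((a2:ℂ)+(b2:ℂ)*Complex.I)) * (((p*a1+q*b1+(a2*b3-a3*b2)) : ℝ) : ℂ) + (Complex.I*((a1:ℂ)+(b1:ℂ)*Complex.I)) * (((p*a2+q*b2+(a3*b1-a1*b3)) : ℝ) : ℂ) = ((p:ℂ)+(q:ℂ)*Complex.I) * (((p*a3+q*b3+(a1*b2-a2*b1)) : ℝ) : ℂ) := by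
  rw [Complex.ext_iff]
  constructor
  · push_cast
    simp only [Complex.add_re, Complex.add_im, Complex.sub_re, Complex.sub_im, Complex.mul_re, Complex.mul_im, Complex.neg_re, Complex.neg_im, Complex.I_re, Complex.I_im, Complex.ofReal_re, Complex.ofReal_im, Complex.zero_re, Complex.zero_im]
    linear_combination (-(b3))*h2
  · push_cast
    simp only [Complex.add_re, Complex.add_im, Complex.sub_re, Complex.sub_im, Complex.mul_re, Complex.mul_im, Complex.neg_re, Complex.neg_im, Complex.I_re, Complex.I_im, Complex.ofReal_re, Complex.ofReal_im, Complex.zero_re, Complex.zero_im]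
    linear_combination (b3)*h1 + (-(a3))*h2

lemma eigL0 (a1 a2 a3 b1 b2 b3 p q : ℝ) (h1 : p*p - q*q = (a1*a1+a2*a2+a3*a3) - (b1*b1+b2*b2+b3*b3)) (h2 : p*q = a1*b1+a2*b2+a3*b3) : ((a1:ℂ)+(b1:ℂ)*Complex.I) * (((-(p*a1)-q*b1+(a2*b3-a3*b2)) : ℝ) : ℂ) + ((a2:ℂ)+(b2:ℂ)*Complex.I) * (((-(p*a2)-q*b2+(a3*b1-a1*b3)) : ℝ) : ℂ) + ((a3:ℂ)+(b3:ℂ)*Complex.I) * (((-(p*a3)-q*b3+(a1*b2-a2*b1)) : ℝ) : ℂ) = (-((p:ℂ)+(q:ℂ)*Complex.I)) * (((-(-(p*p+(b1*b1+b2*b2+b3*b3)))) : ℝ) : ℂ) := by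
  rw [Complex.ext_iff]
  constructor
  · push_cast
    simp only [Complex.add_re, Complex.add_im, Complex.sub_re, Complex.sub_im, Complex.mul_re, Complex.mul_im, Complex.neg_re, Complex.neg_im, Complex.I_re, Complex.I_im, Complex.ofReal_re, Complex.ofReal_im, Complex.zero_re, Complex.zero_im]
    linear_combination (p)*h1 + (q)*h2
  · push_cast
    simp only [Complex.add_re, Complex.add_im, Complex.sub_re, Complex.sub_im, Complex.mul_re, Complex.mul_im, Complex.neg_re, Complex.neg_im, Complex.I_re, Complex.I_im, Complex.ofReal_re, Complex.ofReal_im, Complex.zero_re, Complex.zero_im]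
    linear_combination (p)*h2

lemma eigL1 (a1 a2 a3 b1 b2 b3 p q : ℝ) (h1 : p*p - q*q = (a1*a1+a2*a2+a3*a3) - (b1*b1+b2*b2+b3*b3)) (h2 : p*q = a1*b1+a2*b2+a3*b3) : (-((a1:ℂ)+(b1:ℂ)*Complex.I)) * (((-(p*p+(b1*b1+b2*b2+b3*b3))) : ℝ) : ℂ) + (-Complex.I*((a3:ℂ)+(b3:ℂ)*Complex.I)) * (((-(p*a2)-q*b2+(a3*b1-a1*b3)) : ℝ) : ℂ) + (Complex.I*((a2:ℂ)+(b2:ℂ)*Complex.I)) * (((-(p*a3)-q*b3+(a1*b2-a2*b1)) : ℝ) : ℂ) = (-((p:ℂ)+(q:ℂ)*Complex.I)) * (((-(p*a1)-q*b1+(a2*b3-a3*b2)) : ℝ) : ℂ) := by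
  rw [Complex.ext_iff]
  constructor
  · push_cast
    simp only [Complex.add_re, Complex.add_im, Complex.sub_re, Complex.sub_im, Complex.mul_re, Complex.mul_im, Complex.neg_re, Complex.neg_im, Complex.I_re, Complex.I_im, Complex.ofReal_re, Complex.ofReal_im, Complex.zero_re, Complex.zero_im]
    linear_combination (-(b1))*h2
  · push_cast
    simp only [Complex.add_re, Complex.add_im, Complex.sub_re, Complex.sub_im, Complex.mul_re, Complex.mul_im, Complex.neg_re, Complex.neg_im, Complex.I_re, Complex.I_im, Complex.ofReal_re, Complex.ofReal_im, Complex.zero_re, Complex.zero_im]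
    linear_combination (b1)*h1 + (-(a1))*h2

lemma eigL2 (a1 a2 a3 b1 b2 b3 p q : ℝ) (h1 : p*p - q*q = (a1*a1+a2*a2+a3*a3) - (b1*b1+b2*b2+b3*b3)) (h2 : p*q = a1*b1+a2*b2+a3*b3) : (-((a2:ℂ)+(b2:ℂ)*Complex.I)) * (((-(p*p+(b1*b1+b2*b2+b3*b3))) : ℝ) : ℂ) + (Complex.I*((a3:ℂ)+(b3:ℂ)*Complex.I)) * (((-(p*a1)-q*b1+(a2*b3-a3*b2)) : ℝ) : ℂ) + (-Complex.I*((a1:ℂ)+(b1:ℂ)*Complex.I)) * (((-(p*a3)-q*b3+(a1*b2-a2*b1)) : ℝ) : ℂ) = (-((p:ℂ)+(q:ℂ)*Complex.I)) * (((-(p*a2)-q*b2+(a3*b1-a1*b3)) : ℝ) : ℂ) := by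
  rw [Complex.ext_iff]
  constructor
  · push_cast
    simp only [Complex.add_re, Complex.add_im, Complex.sub_re, Complex.sub_im, Complex.mul_re, Complex.mul_im, Complex.neg_re, Complex.neg_im, Complex.I_re, Complex.I_im, Complex.ofReal_re, Complex.ofReal_im, Complex.zero_re, Complex.zero_im]
    linear_combination (-(b2))*h2
  · push_cast
    simp only [Complex.add_re, Complex.add_im, Complex.sub_re, Complex.sub_im, Complex.mul_re, Complex.mul_im, Complex.neg_re, Complex.neg_im, Complex.I_re, Complex.I_im, Complex.ofReal_re, Complex.ofReal_im, Complex.zero_re, Complex.zero_im]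
    linear_combination (b2)*h1 + (-(a2))*h2

lemma eigL3 (a1 a2 a3 b1 b2 b3 p q : ℝ) (h1 : p*p - q*q = (a1*a1+a2*a2+a3*a3) - (b1*b1+b2*b2+b3*b3)) (h2 : p*q = a1*b1+a2*b2+a3*b3) : (-((a3:ℂ)+(b3:ℂ)*Complex.I)) * (((-(p*p+(b1*b1+b2*b2+b3*b3))) : ℝ) : ℂ) + (-Complex.I*((a2:ℂ)+(b2:ℂ)*Complex.I)) * (((-(p*a1)-q*b1+(a2*b3-a3*b2)) : ℝ) : ℂ) + (Complex.I*((a1:ℂ)+(b1:ℂ)*Complex.I)) * (((-(p*a2)-q*b2+(a3*b1-a1*b3)) : ℝ) : ℂ) = (-((p:ℂ)+(q:ℂ)*Complex.I)) * (((-(p*a3)-q*b3+(a1*b2-a2*b1)) : ℝ) : ℂ) := by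
  rw [Complex.ext_iff]
  constructor
  · push_cast
    simp only [Complex.add_re, Complex.add_im, Complex.sub_re, Complex.sub_im, Complex.mul_re, Complex.mul_im, Complex.neg_re, Complex.neg_im, Complex.I_re, Complex.I_im, Complex.ofReal_re, Complex.ofReal_im, Complex.zero_re, Complex.zero_im]
    linear_combination (-(b3))*h2
  · push_cast
    simp only [Complex.add_re, Complex.add_im, Complex.sub_re, Complex.sub_im, Complex.mul_re, Complex.mul_im, Complex.neg_re, Complex.neg_im, Complex.I_re, Complex.I_im, Complex.ofReal_re, Complex.ofReal_im, Complex.zero_re, Complex.zero_im]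
    linear_combination (b3)*h1 + (-(a3))*h2

lemma knullid (a1 a2 a3 b1 b2 b3 p q : ℝ) (h1 : p*p - q*q = (a1*a1+a2*a2+a3*a3) - (b1*b1+b2*b2+b3*b3)) (h2 : p*q = a1*b1+a2*b2+a3*b3) : (p*a1+q*b1+(a2*b3-a3*b2))*(p*a1+q*b1+(a2*b3-a3*b2)) + (p*a2+q*b2+(a3*b1-a1*b3))*(p*a2+q*b2+(a3*b1-a1*b3)) + (p*a3+q*b3+(a1*b2-a2*b1))*(p*a3+q*b3+(a1*b2-a2*b1)) = (-(p*p+(b1*b1+b2*b2+b3*b3)))*(-(p*p+(b1*b1+b2*b2+b3*b3))) := by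
  linear_combination (-(p*p+(b1*b1+b2*b2+b3*b3)))*h1 + (-(p*q - (a1*b1+a2*b2+a3*b3)))*h2

lemma lnullid (a1 a2 a3 b1 b2 b3 p q : ℝ) (h1 : p*p - q*q = (a1*a1+a2*a2+a3*a3) - (b1*b1+b2*b2+b3*b3)) (h2 : p*q = a1*b1+a2*b2+a3*b3) : (-(p*a1)-q*b1+(a2*b3-a3*b2))*(-(p*a1)-q*b1+(a2*b3-a3*b2)) + (-(p*a2)-q*b2+(a3*b1-a1*b3))*(-(p*a2)-q*b2+(a3*b1-a1*b3)) + (-(p*a3)-q*b3+(a1*b2-a2*b1))*(-(p*a3)-q*b3+(a1*b2-a2*b1)) = (-(p*p+(b1*b1+b2*b2+b3*b3)))*(-(p*p+(b1*b1+b2*b2+b3*b3))) := by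
  linear_combination (-(p*p+(b1*b1+b2*b2+b3*b3)))*h1 + (-(p*q - (a1*b1+a2*b2+a3*b3)))*h2

lemma klGid (a1 a2 a3 b1 b2 b3 p q : ℝ) (h1 : p*p - q*q = (a1*a1+a2*a2+a3*a3) - (b1*b1+b2*b2+b3*b3)) (h2 : p*q = a1*b1+a2*b2+a3*b3) : -((-(p*p+(b1*b1+b2*b2+b3*b3)))*(-(p*p+(b1*b1+b2*b2+b3*b3)))) + (p*a1+q*b1+(a2*b3-a3*b2))*(-(p*a1)-q*b1+(a2*b3-a3*b2)) + (p*a2+q*b2+(a3*b1-a1*b3))*(-(p*a2)-q*b2+(a3*b1-a1*b3)) + (p*a3+q*b3+(a1*b2-a2*b1))*(-(p*a3)-q*b3+(a1*b2-a2*b1))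
    = -(2*(p*p+q*q)*(p*p+(b1*b1+b2*b2+b3*b3))) := by
  linear_combination (p*p-(b1*b1+b2*b2+b3*b3))*h1 + (3*p*q + (a1*b1+a2*b2+a3*b3))*h2

set_option maxHeartbeats 2000000 in
/-- A regular self-dual 2-form (F² ≠ 0) has exactly two real null
eigendirections k, l with eigenvalues f and -f (f² = -F²/4), and they can be
normalized so that g(k,l) = -1. -/
theorem selfdual_principal_null_directions (F : Fin 4 → Fin 4 → ℂ) (hF : IsSelfDual F)
    (hreg : form2dot F F ≠ 0) (f : ℂ) (hf : f^2 = -(form2dot F F)/4) :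
    ∃ k l : Fin 4 → ℝ,
      k ≠ 0 ∧ l ≠ 0 ∧
      ipR k k = 0 ∧ ipR l l = 0 ∧
      (∀ α, ∑ β, F α β * (k β : ℂ) = f * ((lowR k α : ℝ) : ℂ)) ∧
      (∀ α, ∑ β, F α β * (l β : ℂ) = -f * ((lowR l α : ℝ) : ℂ)) ∧
      ipR k l = -1 ∧
      (∀ v : Fin 4 → ℝ,
        (∀ α, ∑ β, F α β * (v β : ℂ) = f * ((lowR v α : ℝ) : ℂ)) → ∃ t : ℝ, v = t • k) ∧
      (∀ v : Fin 4 → ℝ,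
        (∀ α, ∑ β, F α β * (v β : ℂ) = -f * ((lowR v α : ℝ) : ℂ)) → ∃ t : ℝ, v = t • l) := by
  obtain ⟨hanti, hsd⟩ := hF
  obtain ⟨a1, b1, hE1⟩ : ∃ x y : ℝ, F 0 1 = (x:ℂ) + (y:ℂ)*Complex.I := ⟨_,_,(Complex.re_add_im _).symm⟩
  obtain ⟨a2, b2, hE2⟩ : ∃ x y : ℝ, F 0 2 = (x:ℂ) + (y:ℂ)*Complex.I := ⟨_,_,(Complex.re_add_im _).symm⟩
  obtain ⟨a3, b3, hE3⟩ : ∃ x y : ℝ, F 0 3 = (x:ℂ) + (y:ℂ)*Complex.I := ⟨_,_,(Complex.re_add_im _).symm⟩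
  obtain ⟨p, q, hfc⟩ : ∃ x y : ℝ, f = (x:ℂ) + (y:ℂ)*Complex.I := ⟨_,_,(Complex.re_add_im _).symm⟩
  have h23 : F 2 3 = -Complex.I * F 0 1 := by
    have h := hsd 0 1
    rw [hodge] at h
    simp only [Fin.sum_univ_four, raise2, gmink, eps4_cast, epsZval] at h
    simp (config := { decide := true }) at h
    norm_num [show ((3:Fin 4):ℕ) = 3 from rfl, show ((2:Fin 4):ℕ) = 2 from rfl,
      show ((1:Fin 4):ℕ) = 1 from rfl, show ((0:Fin 4):ℕ) = 0 from rfl] at h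
    rw [hanti 3 2] at h
    linear_combination h
  have h13 : F 1 3 = Complex.I * F 0 2 := by
    have h := hsd 0 2
    rw [hodge] at h
    simp only [Fin.sum_univ_four, raise2, gmink, eps4_cast, epsZval] at h
    simp (config := { decide := true }) at h
    norm_num [show ((3:Fin 4):ℕ) = 3 from rfl, show ((2:Fin 4):ℕ) = 2 from rfl,
      show ((1:Fin 4):ℕ) = 1 from rfl, show ((0:Fin 4):ℕ) = 0 from rfl] at h
    rw [hanti 3 1] at h
    linear_combination -h
  have h12 : F 1 2 = -Complex.I * F 0 3 := by
    have h := hsd 0 3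
    rw [hodge] at h
    simp only [Fin.sum_univ_four, raise2, gmink, eps4_cast, epsZval] at h
    simp (config := { decide := true }) at h
    norm_num [show ((3:Fin 4):ℕ) = 3 from rfl, show ((2:Fin 4):ℕ) = 2 from rfl,
      show ((1:Fin 4):ℕ) = 1 from rfl, show ((0:Fin 4):ℕ) = 0 from rfl] at h
    rw [hanti 2 1] at h
    linear_combination h
  have d00 : F 0 0 = 0 := by linear_combination (1/2 : ℂ) * hanti 0 0
  have d11 : F 1 1 = 0 := by linear_combination (1/2 : ℂ) * hanti 1 1
  have d22 : F 2 2 = 0 := by linear_combination (1/2 : ℂ) * hanti 2 2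
  have d33 : F 3 3 = 0 := by linear_combination (1/2 : ℂ) * hanti 3 3
  have d10 : F 1 0 = -((a1:ℂ) + (b1:ℂ)*Complex.I) := by rw [hanti 1 0, hE1]
  have d20 : F 2 0 = -((a2:ℂ) + (b2:ℂ)*Complex.I) := by rw [hanti 2 0, hE2]
  have d30 : F 3 0 = -((a3:ℂ) + (b3:ℂ)*Complex.I) := by rw [hanti 3 0, hE3]
  have d23 : F 2 3 = -Complex.I*((a1:ℂ) + (b1:ℂ)*Complex.I) := by rw [h23, hE1]
  have d32 : F 3 2 = Complex.I*((a1:ℂ) + (b1:ℂ)*Complex.I) := by rw [hanti 3 2, d23]; ring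
  have d13 : F 1 3 = Complex.I*((a2:ℂ) + (b2:ℂ)*Complex.I) := by rw [h13, hE2]
  have d31 : F 3 1 = -Complex.I*((a2:ℂ) + (b2:ℂ)*Complex.I) := by rw [hanti 3 1, d13]; ring
  have d12 : F 1 2 = -Complex.I*((a3:ℂ) + (b3:ℂ)*Complex.I) := by rw [h12, hE3]
  have d21 : F 2 1 = Complex.I*((a3:ℂ) + (b3:ℂ)*Complex.I) := by rw [hanti 2 1, d12]; ring
  have hFF : form2dot F F =
      -4*(((a1:ℂ)+(b1:ℂ)*Complex.I)*((a1:ℂ)+(b1:ℂ)*Complex.I)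
        + ((a2:ℂ)+(b2:ℂ)*Complex.I)*((a2:ℂ)+(b2:ℂ)*Complex.I)
        + ((a3:ℂ)+(b3:ℂ)*Complex.I)*((a3:ℂ)+(b3:ℂ)*Complex.I)) := by
    simp only [form2dot, raise2, gmink, Fin.sum_univ_four]
    simp (config := { decide := true })
    rw [d00, d11, d22, d33, hE1, hE2, hE3, d10, d20, d30, d23, d32, d13, d31, d12, d21]
    rw [Complex.ext_iff]
    constructor
    · simp only [Complex.add_re, Complex.add_im, Complex.sub_re, Complex.sub_im, Complex.mul_re,
        Complex.mul_im, Complex.neg_re, Complex.neg_im, Complex.I_re, Complex.I_im,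
        Complex.ofReal_re, Complex.ofReal_im, Complex.zero_re, Complex.zero_im,
        Complex.re_ofNat, Complex.im_ofNat]
      ring
    · simp only [Complex.add_re, Complex.add_im, Complex.sub_re, Complex.sub_im, Complex.mul_re,
        Complex.mul_im, Complex.neg_re, Complex.neg_im, Complex.I_re, Complex.I_im,
        Complex.ofReal_re, Complex.ofReal_im, Complex.zero_re, Complex.zero_im,
        Complex.re_ofNat, Complex.im_ofNat]
      ring
  have hf2 : ((p:ℂ)+(q:ℂ)*Complex.I)*((p:ℂ)+(q:ℂ)*Complex.I) =
      ((a1:ℂ)+(b1:ℂ)*Complex.I)*((a1:ℂ)+(b1:ℂ)*Complex.I)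
        + ((a2:ℂ)+(b2:ℂ)*Complex.I)*((a2:ℂ)+(b2:ℂ)*Complex.I)
        + ((a3:ℂ)+(b3:ℂ)*Complex.I)*((a3:ℂ)+(b3:ℂ)*Complex.I) := by
    have : f*f = f^2 := by ring
    rw [← hfc, this, hf, hFF]; ring
  have h1 : p*p - q*q = (a1*a1+a2*a2+a3*a3) - (b1*b1+b2*b2+b3*b3) := by
    have h := congrArg Complex.re hf2
    simp only [Complex.add_re, Complex.mul_re, Complex.mul_im, Complex.add_im,
      Complex.ofReal_re, Complex.ofReal_im, Complex.I_re, Complex.I_im] at h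
    nlinarith [h]
  have h2 : p*q = a1*b1+a2*b2+a3*b3 := by
    have h := congrArg Complex.im hf2
    simp only [Complex.add_re, Complex.mul_re, Complex.mul_im, Complex.add_im,
      Complex.ofReal_re, Complex.ofReal_im, Complex.I_re, Complex.I_im] at h
    nlinarith [h]
  have hfne : f ≠ 0 := by
    intro h0
    apply hreg
    have h : (0:ℂ) = -(form2dot F F)/4 := by rw [← hf, h0]; ring
    linear_combination 4 * h
  have hfc' : ((p:ℂ)+(q:ℂ)*Complex.I) ≠ 0 := by rw [← hfc]; exact hfne
  have hpq : 0 < p*p + q*q := by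
    rcases lt_or_eq_of_le (by nlinarith [mul_self_nonneg p, mul_self_nonneg q] : (0:ℝ) ≤ p*p+q*q) with h | h
    · exact h
    · exfalso; apply hfne
      have hp : p = 0 := by nlinarith [mul_self_nonneg p, mul_self_nonneg q]
      have hq : q = 0 := by nlinarith [mul_self_nonneg p, mul_self_nonneg q]
      rw [hfc, hp, hq]; simp
  have hS : 0 < p*p + (b1*b1+b2*b2+b3*b3) := by
    nlinarith [mul_self_nonneg a1, mul_self_nonneg a2, mul_self_nonneg a3,
      mul_self_nonneg b1, mul_self_nonneg b2, mul_self_nonneg b3]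
  have hK0e := eigK0 a1 a2 a3 b1 b2 b3 p q h1 h2
  have hK1e := eigK1 a1 a2 a3 b1 b2 b3 p q h1 h2
  have hK2e := eigK2 a1 a2 a3 b1 b2 b3 p q h1 h2
  have hK3e := eigK3 a1 a2 a3 b1 b2 b3 p q h1 h2
  have hL0e := eigL0 a1 a2 a3 b1 b2 b3 p q h1 h2
  have hL1e := eigL1 a1 a2 a3 b1 b2 b3 p q h1 h2
  have hL2e := eigL2 a1 a2 a3 b1 b2 b3 p q h1 h2
  have hL3e := eigL3 a1 a2 a3 b1 b2 b3 p q h1 h2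
  push_cast at hK0e hK1e hK2e hK3e hL0e hL1e hL2e hL3e
  have hknull := knullid a1 a2 a3 b1 b2 b3 p q h1 h2
  have hlnull := lnullid a1 a2 a3 b1 b2 b3 p q h1 h2
  have hG := klGid a1 a2 a3 b1 b2 b3 p q h1 h2
  have hKTne : (-(p*p+(b1*b1+b2*b2+b3*b3))) ≠ 0 := by
    intro h; linarith
  have hKTne' : (-(p*p+(b1*b1+b2*b2+b3*b3))) ≠ 0 := hKTne
  have hcpos : (0:ℝ) < (2*(p*p+q*q)*(p*p+(b1*b1+b2*b2+b3*b3))) := by nlinarith [hpq, hS]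
  have hinv : (2*(p*p+q*q)*(p*p+(b1*b1+b2*b2+b3*b3))) * (2*(p*p+q*q)*(p*p+(b1*b1+b2*b2+b3*b3)))⁻¹ = 1 := mul_inv_cancel₀ (ne_of_gt hcpos)
  set kv : Fin 4 → ℝ := ![(-(p*p+(b1*b1+b2*b2+b3*b3))), (p*a1+q*b1+(a2*b3-a3*b2)), (p*a2+q*b2+(a3*b1-a1*b3)), (p*a3+q*b3+(a1*b2-a2*b1))] with hkv
  set lv : Fin 4 → ℝ := (2*(p*p+q*q)*(p*p+(b1*b1+b2*b2+b3*b3)))⁻¹ • ![(-(p*p+(b1*b1+b2*b2+b3*b3))), (-(p*a1)-q*b1+(a2*b3-a3*b2)), (-(p*a2)-q*b2+(a3*b1-a1*b3)), (-(p*a3)-q*b3+(a1*b2-a2*b1))] with hlv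
  have kv0 : kv 0 = (-(p*p+(b1*b1+b2*b2+b3*b3))) := rfl
  have kv1 : kv 1 = (p*a1+q*b1+(a2*b3-a3*b2)) := rfl
  have kv2 : kv 2 = (p*a2+q*b2+(a3*b1-a1*b3)) := rfl
  have kv3 : kv 3 = (p*a3+q*b3+(a1*b2-a2*b1)) := rfl
  have lv0 : lv 0 = (2*(p*p+q*q)*(p*p+(b1*b1+b2*b2+b3*b3)))⁻¹ * (-(p*p+(b1*b1+b2*b2+b3*b3))) := rfl
  have lv1 : lv 1 = (2*(p*p+q*q)*(p*p+(b1*b1+b2*b2+b3*b3)))⁻¹ * (-(p*a1)-q*b1+(a2*b3-a3*b2)) := rfl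
  have lv2 : lv 2 = (2*(p*p+q*q)*(p*p+(b1*b1+b2*b2+b3*b3)))⁻¹ * (-(p*a2)-q*b2+(a3*b1-a1*b3)) := rfl
  have lv3 : lv 3 = (2*(p*p+q*q)*(p*p+(b1*b1+b2*b2+b3*b3)))⁻¹ * (-(p*a3)-q*b3+(a1*b2-a2*b1)) := rfl
  have gK0 : ∑ β, F 0 β * ((kv β : ℝ) : ℂ) = f * ((lowR kv 0 : ℝ) : ℂ) := by
    rw [Fin.sum_univ_four, lowR0, kv0, kv1, kv2, kv3, d00, hE1, hE2, hE3, hfc]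
    push_cast
    linear_combination hK0e
  have gK1 : ∑ β, F 1 β * ((kv β : ℝ) : ℂ) = f * ((lowR kv 1 : ℝ) : ℂ) := by
    rw [Fin.sum_univ_four, lowR1, kv0, kv1, kv2, kv3, d10, d11, d12, d13, hfc]
    push_cast
    linear_combination hK1e
  have gK2 : ∑ β, F 2 β * ((kv β : ℝ) : ℂ) = f * ((lowR kv 2 : ℝ) : ℂ) := by
    rw [Fin.sum_univ_four, lowR2, kv0, kv1, kv2, kv3, d20, d21, d22, d23, hfc]
    push_cast
    linear_combination hK2e
  have gK3 : ∑ β, F 3 β * ((kv β : ℝ) : ℂ) = f * ((lowR kv 3 : ℝ) : ℂ) := by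
    rw [Fin.sum_univ_four, lowR3, kv0, kv1, kv2, kv3, d30, d31, d32, d33, hfc]
    push_cast
    linear_combination hK3e
  have gL0 : ∑ β, F 0 β * ((lv β : ℝ) : ℂ) = -f * ((lowR lv 0 : ℝ) : ℂ) := by
    rw [Fin.sum_univ_four, lowR0, lv0, lv1, lv2, lv3, d00, hE1, hE2, hE3, hfc]
    push_cast
    linear_combination ((2*((p:ℂ)*(p:ℂ)+(q:ℂ)*(q:ℂ))*((p:ℂ)*(p:ℂ)+((b1:ℂ)*(b1:ℂ)+(b2:ℂ)*(b2:ℂ)+(b3:ℂ)*(b3:ℂ)))))⁻¹ * hL0e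
  have gL1 : ∑ β, F 1 β * ((lv β : ℝ) : ℂ) = -f * ((lowR lv 1 : ℝ) : ℂ) := by
    rw [Fin.sum_univ_four, lowR1, lv0, lv1, lv2, lv3, d10, d11, d12, d13, hfc]
    push_cast
    linear_combination ((2*((p:ℂ)*(p:ℂ)+(q:ℂ)*(q:ℂ))*((p:ℂ)*(p:ℂ)+((b1:ℂ)*(b1:ℂ)+(b2:ℂ)*(b2:ℂ)+(b3:ℂ)*(b3:ℂ)))))⁻¹ * hL1e
  have gL2 : ∑ β, F 2 β * ((lv β : ℝ) : ℂ) = -f * ((lowR lv 2 : ℝ) : ℂ) := by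
    rw [Fin.sum_univ_four, lowR2, lv0, lv1, lv2, lv3, d20, d21, d22, d23, hfc]
    push_cast
    linear_combination ((2*((p:ℂ)*(p:ℂ)+(q:ℂ)*(q:ℂ))*((p:ℂ)*(p:ℂ)+((b1:ℂ)*(b1:ℂ)+(b2:ℂ)*(b2:ℂ)+(b3:ℂ)*(b3:ℂ)))))⁻¹ * hL2e
  have gL3 : ∑ β, F 3 β * ((lv β : ℝ) : ℂ) = -f * ((lowR lv 3 : ℝ) : ℂ) := by
    rw [Fin.sum_univ_four, lowR3, lv0, lv1, lv2, lv3, d30, d31, d32, d33, hfc]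
    push_cast
    linear_combination ((2*((p:ℂ)*(p:ℂ)+(q:ℂ)*(q:ℂ))*((p:ℂ)*(p:ℂ)+((b1:ℂ)*(b1:ℂ)+(b2:ℂ)*(b2:ℂ)+(b3:ℂ)*(b3:ℂ)))))⁻¹ * hL3e
  refine ⟨kv, lv, ?_, ?_, ?_, ?_, ?_, ?_, ?_, ?_, ?_⟩
  · intro h
    have h0 := congrFun h 0
    rw [kv0] at h0
    simp only [Pi.zero_apply] at h0
    exact hKTne h0
  · intro h
    have h0 := congrFun h 0
    rw [lv0] at h0
    simp only [Pi.zero_apply] at h0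
    rcases mul_eq_zero.mp h0 with h' | h'
    · exact ne_of_gt (inv_pos.mpr hcpos) h'
    · exact hKTne h'
  · rw [ipR_eq, kv0, kv1, kv2, kv3]
    linear_combination hknull
  · rw [ipR_eq, lv0, lv1, lv2, lv3]
    linear_combination ((2*(p*p+q*q)*(p*p+(b1*b1+b2*b2+b3*b3)))⁻¹ * (2*(p*p+q*q)*(p*p+(b1*b1+b2*b2+b3*b3)))⁻¹) * hlnull
  · intro α
    fin_cases α
    · exact gK0
    · exact gK1
    · exact gK2
    · exact gK3
  · intro α
    fin_cases α
    · exact gL0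
    · exact gL1
    · exact gL2
    · exact gL3
  · rw [ipR_eq, kv0, kv1, kv2, kv3, lv0, lv1, lv2, lv3]
    linear_combination (2*(p*p+q*q)*(p*p+(b1*b1+b2*b2+b3*b3)))⁻¹ * hG - hinv
  · intro w hv
    have e0 := hv 0
    have e1 := hv 1
    have e2 := hv 2
    have e3 := hv 3
    rw [Fin.sum_univ_four, lowR0, d00, hE1, hE2, hE3, hfc] at e0
    rw [Fin.sum_univ_four, lowR1, d10, d11, d12, d13, hfc] at e1
    rw [Fin.sum_univ_four, lowR2, d20, d21, d22, d23, hfc] at e2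
    rw [Fin.sum_univ_four, lowR3, d30, d31, d32, d33, hfc] at e3
    push_cast at e0 e1 e2 e3
    have hNc : ((p:ℂ)+(q:ℂ)*Complex.I) * (((w 1 : ℝ) : ℂ)*((w 1 : ℝ) : ℂ) + ((w 2 : ℝ) : ℂ)*((w 2 : ℝ) : ℂ) + ((w 3 : ℝ) : ℂ)*((w 3 : ℝ) : ℂ) - ((w 0 : ℝ) : ℂ)*((w 0 : ℝ) : ℂ)) = 0 := by
      first
      | linear_combination (-((w 1 : ℝ) : ℂ))*e1 + (-((w 2 : ℝ) : ℂ))*e2 + (-((w 3 : ℝ) : ℂ))*e3 + (-((w 0 : ℝ) : ℂ))*e0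
      | linear_combination ((w 1 : ℝ) : ℂ)*e1 + ((w 2 : ℝ) : ℂ)*e2 + ((w 3 : ℝ) : ℂ)*e3 + ((w 0 : ℝ) : ℂ)*e0
    have hOc : ((p:ℂ)+(q:ℂ)*Complex.I) * (((w 1 : ℝ) : ℂ)*((p:ℂ)*(a1:ℂ)+(q:ℂ)*(b1:ℂ)+((a2:ℂ)*(b3:ℂ)-(a3:ℂ)*(b2:ℂ))) + ((w 2 : ℝ) : ℂ)*((p:ℂ)*(a2:ℂ)+(q:ℂ)*(b2:ℂ)+((a3:ℂ)*(b1:ℂ)-(a1:ℂ)*(b3:ℂ))) + ((w 3 : ℝ) : ℂ)*((p:ℂ)*(a3:ℂ)+(q:ℂ)*(b3:ℂ)+((a1:ℂ)*(b2:ℂ)-(a2:ℂ)*(b1:ℂ))) - ((w 0 : ℝ) : ℂ)*(-((p:ℂ)*(p:ℂ)+((b1:ℂ)*(b1:ℂ)+(b2:ℂ)*(b2:ℂ)+(b3:ℂ)*(b3:ℂ))))) = 0 := by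
      first
      | linear_combination (-(1/2:ℂ))*(((p:ℂ)*(a1:ℂ)+(q:ℂ)*(b1:ℂ)+((a2:ℂ)*(b3:ℂ)-(a3:ℂ)*(b2:ℂ)))*e1 + ((p:ℂ)*(a2:ℂ)+(q:ℂ)*(b2:ℂ)+((a3:ℂ)*(b1:ℂ)-(a1:ℂ)*(b3:ℂ)))*e2 + ((p:ℂ)*(a3:ℂ)+(q:ℂ)*(b3:ℂ)+((a1:ℂ)*(b2:ℂ)-(a2:ℂ)*(b1:ℂ)))*e3 + (-((p:ℂ)*(p:ℂ)+((b1:ℂ)*(b1:ℂ)+(b2:ℂ)*(b2:ℂ)+(b3:ℂ)*(b3:ℂ))))*e0 + ((w 1 : ℝ) : ℂ)*hK1e + ((w 2 : ℝ) : ℂ)*hK2e + ((w 3 : ℝ) : ℂ)*hK3e + ((w 0 : ℝ) : ℂ)*hK0e)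
      | linear_combination ((1/2:ℂ))*(((p:ℂ)*(a1:ℂ)+(q:ℂ)*(b1:ℂ)+((a2:ℂ)*(b3:ℂ)-(a3:ℂ)*(b2:ℂ)))*e1 + ((p:ℂ)*(a2:ℂ)+(q:ℂ)*(b2:ℂ)+((a3:ℂ)*(b1:ℂ)-(a1:ℂ)*(b3:ℂ)))*e2 + ((p:ℂ)*(a3:ℂ)+(q:ℂ)*(b3:ℂ)+((a1:ℂ)*(b2:ℂ)-(a2:ℂ)*(b1:ℂ)))*e3 + (-((p:ℂ)*(p:ℂ)+((b1:ℂ)*(b1:ℂ)+(b2:ℂ)*(b2:ℂ)+(b3:ℂ)*(b3:ℂ))))*e0 + ((w 1 : ℝ) : ℂ)*hK1e + ((w 2 : ℝ) : ℂ)*hK2e + ((w 3 : ℝ) : ℂ)*hK3e + ((w 0 : ℝ) : ℂ)*hK0e)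
    have hN : (w 1)*(w 1) + (w 2)*(w 2) + (w 3)*(w 3) = (w 0)*(w 0) := by
      have h' := (mul_eq_zero.mp hNc).resolve_left hfc'
      have h'' : (((w 1)*(w 1) + (w 2)*(w 2) + (w 3)*(w 3) - (w 0)*(w 0) : ℝ) : ℂ) = 0 := by
        push_cast; linear_combination h'
      have h3 := Complex.ofReal_eq_zero.mp h''
      linarith
    have hO : (w 1)*(p*a1+q*b1+(a2*b3-a3*b2)) + (w 2)*(p*a2+q*b2+(a3*b1-a1*b3)) + (w 3)*(p*a3+q*b3+(a1*b2-a2*b1)) = (w 0)*(-(p*p+(b1*b1+b2*b2+b3*b3))) := by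
      have h' := (mul_eq_zero.mp hOc).resolve_left hfc'
      have h'' : (((w 1)*(p*a1+q*b1+(a2*b3-a3*b2)) + (w 2)*(p*a2+q*b2+(a3*b1-a1*b3)) + (w 3)*(p*a3+q*b3+(a1*b2-a2*b1)) - (w 0)*(-(p*p+(b1*b1+b2*b2+b3*b3))) : ℝ) : ℂ) = 0 := by
        push_cast; linear_combination h'
      have h3 := Complex.ofReal_eq_zero.mp h''
      linarith
    have hsq : ((-(p*p+(b1*b1+b2*b2+b3*b3)))*(w 1) - (w 0)*(p*a1+q*b1+(a2*b3-a3*b2)))*((-(p*p+(b1*b1+b2*b2+b3*b3)))*(w 1) - (w 0)*(p*a1+q*b1+(a2*b3-a3*b2)))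
        + ((-(p*p+(b1*b1+b2*b2+b3*b3)))*(w 2) - (w 0)*(p*a2+q*b2+(a3*b1-a1*b3)))*((-(p*p+(b1*b1+b2*b2+b3*b3)))*(w 2) - (w 0)*(p*a2+q*b2+(a3*b1-a1*b3)))
        + ((-(p*p+(b1*b1+b2*b2+b3*b3)))*(w 3) - (w 0)*(p*a3+q*b3+(a1*b2-a2*b1)))*((-(p*p+(b1*b1+b2*b2+b3*b3)))*(w 3) - (w 0)*(p*a3+q*b3+(a1*b2-a2*b1))) = 0 := by
      linear_combination ((-(p*p+(b1*b1+b2*b2+b3*b3)))*(-(p*p+(b1*b1+b2*b2+b3*b3))))*hN + (-2*(-(p*p+(b1*b1+b2*b2+b3*b3)))*(w 0))*hO + ((w 0)*(w 0))*hknull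
    have c1 : (-(p*p+(b1*b1+b2*b2+b3*b3)))*(w 1) - (w 0)*(p*a1+q*b1+(a2*b3-a3*b2)) = 0 := by
      have hle : ((-(p*p+(b1*b1+b2*b2+b3*b3)))*(w 1) - (w 0)*(p*a1+q*b1+(a2*b3-a3*b2)))*((-(p*p+(b1*b1+b2*b2+b3*b3)))*(w 1) - (w 0)*(p*a1+q*b1+(a2*b3-a3*b2))) ≤ 0 := by
        linarith [hsq, mul_self_nonneg ((-(p*p+(b1*b1+b2*b2+b3*b3)))*(w 2) - (w 0)*(p*a2+q*b2+(a3*b1-a1*b3))), mul_self_nonneg ((-(p*p+(b1*b1+b2*b2+b3*b3)))*(w 3) - (w 0)*(p*a3+q*b3+(a1*b2-a2*b1)))]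
      exact mul_self_eq_zero.mp (le_antisymm hle (mul_self_nonneg _))
    have c2 : (-(p*p+(b1*b1+b2*b2+b3*b3)))*(w 2) - (w 0)*(p*a2+q*b2+(a3*b1-a1*b3)) = 0 := by
      have hle : ((-(p*p+(b1*b1+b2*b2+b3*b3)))*(w 2) - (w 0)*(p*a2+q*b2+(a3*b1-a1*b3)))*((-(p*p+(b1*b1+b2*b2+b3*b3)))*(w 2) - (w 0)*(p*a2+q*b2+(a3*b1-a1*b3))) ≤ 0 := by
        linarith [hsq, mul_self_nonneg ((-(p*p+(b1*b1+b2*b2+b3*b3)))*(w 1) - (w 0)*(p*a1+q*b1+(a2*b3-a3*b2))), mul_self_nonneg ((-(p*p+(b1*b1+b2*b2+b3*b3)))*(w 3) - (w 0)*(p*a3+q*b3+(a1*b2-a2*b1)))]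
      exact mul_self_eq_zero.mp (le_antisymm hle (mul_self_nonneg _))
    have c3 : (-(p*p+(b1*b1+b2*b2+b3*b3)))*(w 3) - (w 0)*(p*a3+q*b3+(a1*b2-a2*b1)) = 0 := by
      have hle : ((-(p*p+(b1*b1+b2*b2+b3*b3)))*(w 3) - (w 0)*(p*a3+q*b3+(a1*b2-a2*b1)))*((-(p*p+(b1*b1+b2*b2+b3*b3)))*(w 3) - (w 0)*(p*a3+q*b3+(a1*b2-a2*b1))) ≤ 0 := by
        linarith [hsq, mul_self_nonneg ((-(p*p+(b1*b1+b2*b2+b3*b3)))*(w 1) - (w 0)*(p*a1+q*b1+(a2*b3-a3*b2))), mul_self_nonneg ((-(p*p+(b1*b1+b2*b2+b3*b3)))*(w 2) - (w 0)*(p*a2+q*b2+(a3*b1-a1*b3)))]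
      exact mul_self_eq_zero.mp (le_antisymm hle (mul_self_nonneg _))
    refine ⟨w 0 / (-(p*p+(b1*b1+b2*b2+b3*b3))), ?_⟩
    have comp0 : w 0 = w 0 / (-(p*p+(b1*b1+b2*b2+b3*b3))) * (-(p*p+(b1*b1+b2*b2+b3*b3))) := (div_mul_cancel₀ (w 0) hKTne).symm
    have comp1 : w 1 = w 0 / (-(p*p+(b1*b1+b2*b2+b3*b3))) * (p*a1+q*b1+(a2*b3-a3*b2)) := by
      rw [div_mul_eq_mul_div, eq_div_iff hKTne]
      first | linear_combination c1 | linear_combination -c1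
    have comp2 : w 2 = w 0 / (-(p*p+(b1*b1+b2*b2+b3*b3))) * (p*a2+q*b2+(a3*b1-a1*b3)) := by
      rw [div_mul_eq_mul_div, eq_div_iff hKTne]
      first | linear_combination c2 | linear_combination -c2
    have comp3 : w 3 = w 0 / (-(p*p+(b1*b1+b2*b2+b3*b3))) * (p*a3+q*b3+(a1*b2-a2*b1)) := by
      rw [div_mul_eq_mul_div, eq_div_iff hKTne]
      first | linear_combination c3 | linear_combination -c3
    funext i
    fin_cases i
    · exact comp0
    · exact comp1
    · exact comp2
    · exact comp3
  · intro w hv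
    have e0 := hv 0
    have e1 := hv 1
    have e2 := hv 2
    have e3 := hv 3
    rw [Fin.sum_univ_four, lowR0, d00, hE1, hE2, hE3, hfc] at e0
    rw [Fin.sum_univ_four, lowR1, d10, d11, d12, d13, hfc] at e1
    rw [Fin.sum_univ_four, lowR2, d20, d21, d22, d23, hfc] at e2
    rw [Fin.sum_univ_four, lowR3, d30, d31, d32, d33, hfc] at e3
    push_cast at e0 e1 e2 e3
    have hNc : (-((p:ℂ)+(q:ℂ)*Complex.I)) * (((w 1 : ℝ) : ℂ)*((w 1 : ℝ) : ℂ) + ((w 2 : ℝ) : ℂ)*((w 2 : ℝ) : ℂ) + ((w 3 : ℝ) : ℂ)*((w 3 : ℝ) : ℂ) - ((w 0 : ℝ) : ℂ)*((w 0 : ℝ) : ℂ)) = 0 := by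
      first
      | linear_combination (-((w 1 : ℝ) : ℂ))*e1 + (-((w 2 : ℝ) : ℂ))*e2 + (-((w 3 : ℝ) : ℂ))*e3 + (-((w 0 : ℝ) : ℂ))*e0
      | linear_combination ((w 1 : ℝ) : ℂ)*e1 + ((w 2 : ℝ) : ℂ)*e2 + ((w 3 : ℝ) : ℂ)*e3 + ((w 0 : ℝ) : ℂ)*e0
    have hOc : (-((p:ℂ)+(q:ℂ)*Complex.I)) * (((w 1 : ℝ) : ℂ)*(-((p:ℂ)*(a1:ℂ))-(q:ℂ)*(b1:ℂ)+((a2:ℂ)*(b3:ℂ)-(a3:ℂ)*(b2:ℂ))) + ((w 2 : ℝ) : ℂ)*(-((p:ℂ)*(a2:ℂ))-(q:ℂ)*(b2:ℂ)+((a3:ℂ)*(b1:ℂ)-(a1:ℂ)*(b3:ℂ))) + ((w 3 : ℝ) : ℂ)*(-((p:ℂ)*(a3:ℂ))-(q:ℂ)*(b3:ℂ)+((a1:ℂ)*(b2:ℂ)-(a2:ℂ)*(b1:ℂ))) - ((w 0 : ℝ) : ℂ)*(-((p:ℂ)*(p:ℂ)+((b1:ℂ)*(b1:ℂ)+(b2:ℂ)*(b2:ℂ)+(b3:ℂ)*(b3:ℂ)))))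 = 0 := by
      first
      | linear_combination (-(1/2:ℂ))*((-((p:ℂ)*(a1:ℂ))-(q:ℂ)*(b1:ℂ)+((a2:ℂ)*(b3:ℂ)-(a3:ℂ)*(b2:ℂ)))*e1 + (-((p:ℂ)*(a2:ℂ))-(q:ℂ)*(b2:ℂ)+((a3:ℂ)*(b1:ℂ)-(a1:ℂ)*(b3:ℂ)))*e2 + (-((p:ℂ)*(a3:ℂ))-(q:ℂ)*(b3:ℂ)+((a1:ℂ)*(b2:ℂ)-(a2:ℂ)*(b1:ℂ)))*e3 + (-((p:ℂ)*(p:ℂ)+((b1:ℂ)*(b1:ℂ)+(b2:ℂ)*(b2:ℂ)+(b3:ℂ)*(b3:ℂ))))*e0 + ((w 1 : ℝ) : ℂ)*hL1e + ((w 2 : ℝ) : ℂ)*hL2e + ((w 3 : ℝ) : ℂ)*hL3e + ((w 0 : ℝ) : ℂ)*hL0e)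
      | linear_combination ((1/2:ℂ))*((-((p:ℂ)*(a1:ℂ))-(q:ℂ)*(b1:ℂ)+((a2:ℂ)*(b3:ℂ)-(a3:ℂ)*(b2:ℂ)))*e1 + (-((p:ℂ)*(a2:ℂ))-(q:ℂ)*(b2:ℂ)+((a3:ℂ)*(b1:ℂ)-(a1:ℂ)*(b3:ℂ)))*e2 + (-((p:ℂ)*(a3:ℂ))-(q:ℂ)*(b3:ℂ)+((a1:ℂ)*(b2:ℂ)-(a2:ℂ)*(b1:ℂ)))*e3 + (-((p:ℂ)*(p:ℂ)+((b1:ℂ)*(b1:ℂ)+(b2:ℂ)*(b2:ℂ)+(b3:ℂ)*(b3:ℂ))))*e0 + ((w 1 : ℝ) : ℂ)*hL1e + ((w 2 : ℝ) : ℂ)*hL2e + ((w 3 : ℝ) : ℂ)*hL3e + ((w 0 : ℝ) : ℂ)*hL0e)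
    have hN : (w 1)*(w 1) + (w 2)*(w 2) + (w 3)*(w 3) = (w 0)*(w 0) := by
      have h' := (mul_eq_zero.mp hNc).resolve_left (neg_ne_zero.mpr hfc')
      have h'' : (((w 1)*(w 1) + (w 2)*(w 2) + (w 3)*(w 3) - (w 0)*(w 0) : ℝ) : ℂ) = 0 := by
        push_cast; linear_combination h'
      have h3 := Complex.ofReal_eq_zero.mp h''
      linarith
    have hO : (w 1)*(-(p*a1)-q*b1+(a2*b3-a3*b2)) + (w 2)*(-(p*a2)-q*b2+(a3*b1-a1*b3)) + (w 3)*(-(p*a3)-q*b3+(a1*b2-a2*b1)) = (w 0)*(-(p*p+(b1*b1+b2*b2+b3*b3))) := by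
      have h' := (mul_eq_zero.mp hOc).resolve_left (neg_ne_zero.mpr hfc')
      have h'' : (((w 1)*(-(p*a1)-q*b1+(a2*b3-a3*b2)) + (w 2)*(-(p*a2)-q*b2+(a3*b1-a1*b3)) + (w 3)*(-(p*a3)-q*b3+(a1*b2-a2*b1)) - (w 0)*(-(p*p+(b1*b1+b2*b2+b3*b3))) : ℝ) : ℂ) = 0 := by
        push_cast; linear_combination h'
      have h3 := Complex.ofReal_eq_zero.mp h''
      linarith
    have hsq : ((-(p*p+(b1*b1+b2*b2+b3*b3)))*(w 1) - (w 0)*(-(p*a1)-q*b1+(a2*b3-a3*b2)))*((-(p*p+(b1*b1+b2*b2+b3*b3)))*(w 1) - (w 0)*(-(p*a1)-q*b1+(a2*b3-a3*b2)))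
        + ((-(p*p+(b1*b1+b2*b2+b3*b3)))*(w 2) - (w 0)*(-(p*a2)-q*b2+(a3*b1-a1*b3)))*((-(p*p+(b1*b1+b2*b2+b3*b3)))*(w 2) - (w 0)*(-(p*a2)-q*b2+(a3*b1-a1*b3)))
        + ((-(p*p+(b1*b1+b2*b2+b3*b3)))*(w 3) - (w 0)*(-(p*a3)-q*b3+(a1*b2-a2*b1)))*((-(p*p+(b1*b1+b2*b2+b3*b3)))*(w 3) - (w 0)*(-(p*a3)-q*b3+(a1*b2-a2*b1))) = 0 := by
      linear_combination ((-(p*p+(b1*b1+b2*b2+b3*b3)))*(-(p*p+(b1*b1+b2*b2+b3*b3))))*hN + (-2*(-(p*p+(b1*b1+b2*b2+b3*b3)))*(w 0))*hO + ((w 0)*(w 0))*hlnull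
    have c1 : (-(p*p+(b1*b1+b2*b2+b3*b3)))*(w 1) - (w 0)*(-(p*a1)-q*b1+(a2*b3-a3*b2)) = 0 := by
      have hle : ((-(p*p+(b1*b1+b2*b2+b3*b3)))*(w 1) - (w 0)*(-(p*a1)-q*b1+(a2*b3-a3*b2)))*((-(p*p+(b1*b1+b2*b2+b3*b3)))*(w 1) - (w 0)*(-(p*a1)-q*b1+(a2*b3-a3*b2))) ≤ 0 := by
        linarith [hsq, mul_self_nonneg ((-(p*p+(b1*b1+b2*b2+b3*b3)))*(w 2) - (w 0)*(-(p*a2)-q*b2+(a3*b1-a1*b3))), mul_self_nonneg ((-(p*p+(b1*b1+b2*b2+b3*b3)))*(w 3) - (w 0)*(-(p*a3)-q*b3+(a1*b2-a2*b1)))]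
      exact mul_self_eq_zero.mp (le_antisymm hle (mul_self_nonneg _))
    have c2 : (-(p*p+(b1*b1+b2*b2+b3*b3)))*(w 2) - (w 0)*(-(p*a2)-q*b2+(a3*b1-a1*b3)) = 0 := by
      have hle : ((-(p*p+(b1*b1+b2*b2+b3*b3)))*(w 2) - (w 0)*(-(p*a2)-q*b2+(a3*b1-a1*b3)))*((-(p*p+(b1*b1+b2*b2+b3*b3)))*(w 2) - (w 0)*(-(p*a2)-q*b2+(a3*b1-a1*b3))) ≤ 0 := by
        linarith [hsq, mul_self_nonneg ((-(p*p+(b1*b1+b2*b2+b3*b3)))*(w 1) - (w 0)*(-(p*a1)-q*b1+(a2*b3-a3*b2))), mul_self_nonneg ((-(p*p+(b1*b1+b2*b2+b3*b3)))*(w 3) - (w 0)*(-(p*a3)-q*b3+(a1*b2-a2*b1)))]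
      exact mul_self_eq_zero.mp (le_antisymm hle (mul_self_nonneg _))
    have c3 : (-(p*p+(b1*b1+b2*b2+b3*b3)))*(w 3) - (w 0)*(-(p*a3)-q*b3+(a1*b2-a2*b1)) = 0 := by
      have hle : ((-(p*p+(b1*b1+b2*b2+b3*b3)))*(w 3) - (w 0)*(-(p*a3)-q*b3+(a1*b2-a2*b1)))*((-(p*p+(b1*b1+b2*b2+b3*b3)))*(w 3) - (w 0)*(-(p*a3)-q*b3+(a1*b2-a2*b1))) ≤ 0 := by
        linarith [hsq, mul_self_nonneg ((-(p*p+(b1*b1+b2*b2+b3*b3)))*(w 1) - (w 0)*(-(p*a1)-q*b1+(a2*b3-a3*b2))), mul_self_nonneg ((-(p*p+(b1*b1+b2*b2+b3*b3)))*(w 2) - (w 0)*(-(p*a2)-q*b2+(a3*b1-a1*b3)))]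
      exact mul_self_eq_zero.mp (le_antisymm hle (mul_self_nonneg _))
    refine ⟨w 0 / (-(p*p+(b1*b1+b2*b2+b3*b3))) * (2*(p*p+q*q)*(p*p+(b1*b1+b2*b2+b3*b3))), ?_⟩
    have comp0 : w 0 = w 0 / (-(p*p+(b1*b1+b2*b2+b3*b3))) * (-(p*p+(b1*b1+b2*b2+b3*b3))) := (div_mul_cancel₀ (w 0) hKTne).symm
    have comp1 : w 1 = w 0 / (-(p*p+(b1*b1+b2*b2+b3*b3))) * (-(p*a1)-q*b1+(a2*b3-a3*b2)) := by
      rw [div_mul_eq_mul_div, eq_div_iff hKTne]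
      first | linear_combination c1 | linear_combination -c1
    have comp2 : w 2 = w 0 / (-(p*p+(b1*b1+b2*b2+b3*b3))) * (-(p*a2)-q*b2+(a3*b1-a1*b3)) := by
      rw [div_mul_eq_mul_div, eq_div_iff hKTne]
      first | linear_combination c2 | linear_combination -c2
    have comp3 : w 3 = w 0 / (-(p*p+(b1*b1+b2*b2+b3*b3))) * (-(p*a3)-q*b3+(a1*b2-a2*b1)) := by
      rw [div_mul_eq_mul_div, eq_div_iff hKTne]
      first | linear_combination c3 | linear_combination -c3
    have step : ∀ x : ℝ, (w 0 / (-(p*p+(b1*b1+b2*b2+b3*b3))) * (2*(p*p+q*q)*(p*p+(b1*b1+b2*b2+b3*b3)))) * ((2*(p*p+q*q)*(p*p+(b1*b1+b2*b2+b3*b3)))⁻¹ * x) = w 0 / (-(p*p+(b1*b1+b2*b2+b3*b3))) * x := by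
      intro x
      rw [show (w 0 / (-(p*p+(b1*b1+b2*b2+b3*b3))) * (2*(p*p+q*q)*(p*p+(b1*b1+b2*b2+b3*b3)))) * ((2*(p*p+q*q)*(p*p+(b1*b1+b2*b2+b3*b3)))⁻¹ * x) = w 0 / (-(p*p+(b1*b1+b2*b2+b3*b3))) * ((2*(p*p+q*q)*(p*p+(b1*b1+b2*b2+b3*b3))) * (2*(p*p+q*q)*(p*p+(b1*b1+b2*b2+b3*b3)))⁻¹) * x from by ring,
        hinv, mul_one]
    funext i
    fin_cases i
    · exact comp0.trans (step (-(p*p+(b1*b1+b2*b2+b3*b3)))).symm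
    · exact comp1.trans (step (-(p*a1)-q*b1+(a2*b3-a3*b2))).symm
    · exact comp2.trans (step (-(p*a2)-q*b2+(a3*b1-a1*b3))).symm
    · exact comp3.trans (step (-(p*a3)-q*b3+(a1*b2-a2*b1))).symm
end
end

section
/- Let F be a complex self-dual 2-form on a 4-dimensional oriented Lorentzian vector space with regular eigenvalue f ≠ 0 and null eigenvectors k, l normalized by g(k,l) = -1, i.e. F_{αβ}k^β = f k_α and F_{αβ}l^β = -f l_α. Then F admits the representation F_{αβ} = f ( -k_α l_β + k_β l_α - i η_{αβγδ} k^γ l^δ ). -/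
noncomputable section
open scoped BigOperators

/-- Integer Levi-Civita symbol via the product formula. -/
def epsI (a b c d : Fin 4) : ℤ :=
  (((b:ℤ)-(a:ℤ))*((c:ℤ)-(a:ℤ))*((d:ℤ)-(a:ℤ))*((c:ℤ)-(b:ℤ))*((d:ℤ)-(b:ℤ))*((d:ℤ)-(c:ℤ)))/12

lemma epsZ_eq : ∀ a b c d : Fin 4,
    (∑ σ : Equiv.Perm (Fin 4),
      if σ 0 = a ∧ σ 1 = b ∧ σ 2 = c ∧ σ 3 = d then ((Equiv.Perm.sign σ : ℤ)) else 0)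
    = epsI a b c d := by decide

lemma eps4_eq (a b c d : Fin 4) : eps4 a b c d = ((epsI a b c d : ℤ) : ℝ) := by
  rw [eps4, ← epsZ_eq a b c d]; push_cast; rfl

set_option maxHeartbeats 1000000 in
/-- A regular self-dual 2-form with eigenvalue f ≠ 0 and normalized
null eigenvectors k, l admits the representation
F_{αβ} = f(-k_α l_β + k_β l_α - i η_{αβγδ} k^γ l^δ). -/
theorem selfdual_canonical_representation (F : Fin 4 → Fin 4 → ℂ) (hF : IsSelfDual F)
    (f : ℂ) (hfne : f ≠ 0) (k l : Fin 4 → ℝ)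
    (hknull : ipR k k = 0) (hlnull : ipR l l = 0) (hnorm : ipR k l = -1)
    (hk : ∀ α, ∑ β, F α β * (k β : ℂ) = f * ((lowR k α : ℝ) : ℂ))
    (hl : ∀ α, ∑ β, F α β * (l β : ℂ) = -f * ((lowR l α : ℝ) : ℂ)) :
    ∀ α β : Fin 4,
      F α β = f * (-((lowR k α : ℝ) : ℂ) * ((lowR l β : ℝ) : ℂ)
        + ((lowR k β : ℝ) : ℂ) * ((lowR l α : ℝ) : ℂ)
        - Complex.I * ∑ γ, ∑ δ, ((eps4 α β γ δ * k γ * l δ : ℝ) : ℂ)) := by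
  obtain ⟨hanti, hsd⟩ := hF
  have hdiag : ∀ μ, F μ μ = 0 := fun μ => by linear_combination (hanti μ μ)/2
  -- Self-duality in components
  have sd1 : F 2 3 = -Complex.I * F 0 1 := by
    have h := hsd 0 1
    simp [hodge, raise2, Fin.sum_univ_four, gmink, eps4_eq, epsI,
      show ((0:Fin 4):ℤ) = 0 from rfl, show ((1:Fin 4):ℤ) = 1 from rfl,
      show ((2:Fin 4):ℤ) = 2 from rfl, show ((3:Fin 4):ℤ) = 3 from rfl] at h
    linear_combination h + hanti 3 2 / 2
  have sd2 : F 3 1 = -Complex.I * F 0 2 := by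
    have h := hsd 0 2
    simp [hodge, raise2, Fin.sum_univ_four, gmink, eps4_eq, epsI,
      show ((0:Fin 4):ℤ) = 0 from rfl, show ((1:Fin 4):ℤ) = 1 from rfl,
      show ((2:Fin 4):ℤ) = 2 from rfl, show ((3:Fin 4):ℤ) = 3 from rfl] at h
    linear_combination h + hanti 1 3 / 2
  have sd3 : F 1 2 = -Complex.I * F 0 3 := by
    have h := hsd 0 3
    simp [hodge, raise2, Fin.sum_univ_four, gmink, eps4_eq, epsI,
      show ((0:Fin 4):ℤ) = 0 from rfl, show ((1:Fin 4):ℤ) = 1 from rfl,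
      show ((2:Fin 4):ℤ) = 2 from rfl, show ((3:Fin 4):ℤ) = 3 from rfl] at h
    linear_combination h + hanti 2 1 / 2
  have h13 : F 1 3 = Complex.I * F 0 2 := by linear_combination hanti 3 1 - sd2
  have h21 : F 2 1 = Complex.I * F 0 3 := by linear_combination hanti 2 1 - sd3
  have h32 : F 3 2 = Complex.I * F 0 1 := by linear_combination hanti 3 2 - sd1
  -- eigenvector equations, expanded
  have hk0 := hk 0; have hk1 := hk 1; have hk2 := hk 2; have hk3 := hk 3
  have hl0 := hl 0; have hl1 := hl 1; have hl2 := hl 2; have hl3 := hl 3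
  simp only [Fin.sum_univ_four, lowR, gminkR] at hk0 hk1 hk2 hk3 hl0 hl1 hl2 hl3
  norm_num at hk0 hk1 hk2 hk3 hl0 hl1 hl2 hl3
  push_cast at hk0 hk1 hk2 hk3 hl0 hl1 hl2 hl3
  -- clean equations
  have E1 : -(F 0 1 * (k 0:ℂ)) - Complex.I*(F 0 3 * (k 2:ℂ)) + Complex.I*(F 0 2 * (k 3:ℂ))
      = f*(k 1:ℂ) := by
    linear_combination hk1 - (k 0:ℂ)*hanti 1 0 - (k 1:ℂ)*hdiag 1 - (k 2:ℂ)*sd3 - (k 3:ℂ)*h13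
  have E2 : -(F 0 2 * (k 0:ℂ)) + Complex.I*(F 0 3 * (k 1:ℂ)) - Complex.I*(F 0 1 * (k 3:ℂ))
      = f*(k 2:ℂ) := by
    linear_combination hk2 - (k 0:ℂ)*hanti 2 0 - (k 1:ℂ)*h21 - (k 2:ℂ)*hdiag 2 - (k 3:ℂ)*sd1
  have E3 : -(F 0 3 * (k 0:ℂ)) - Complex.I*(F 0 2 * (k 1:ℂ)) + Complex.I*(F 0 1 * (k 2:ℂ))
      = f*(k 3:ℂ) := by
    linear_combination hk3 - (k 0:ℂ)*hanti 3 0 - (k 1:ℂ)*sd2 - (k 2:ℂ)*h32 - (k 3:ℂ)*hdiag 3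
  have M0 : F 0 1 * (l 1:ℂ) + F 0 2 * (l 2:ℂ) + F 0 3 * (l 3:ℂ) = f*(l 0:ℂ) := by
    linear_combination hl0 - (l 0:ℂ)*hdiag 0
  have M1 : -(F 0 1 * (l 0:ℂ)) - Complex.I*(F 0 3 * (l 2:ℂ)) + Complex.I*(F 0 2 * (l 3:ℂ))
      = -(f*(l 1:ℂ)) := by
    linear_combination hl1 - (l 0:ℂ)*hanti 1 0 - (l 1:ℂ)*hdiag 1 - (l 2:ℂ)*sd3 - (l 3:ℂ)*h13
  have M2 : -(F 0 2 * (l 0:ℂ)) + Complex.I*(F 0 3 * (l 1:ℂ)) - Complex.I*(F 0 1 * (l 3:ℂ))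
      = -(f*(l 2:ℂ)) := by
    linear_combination hl2 - (l 0:ℂ)*hanti 2 0 - (l 1:ℂ)*h21 - (l 2:ℂ)*hdiag 2 - (l 3:ℂ)*sd1
  have M3 : -(F 0 3 * (l 0:ℂ)) - Complex.I*(F 0 2 * (l 1:ℂ)) + Complex.I*(F 0 1 * (l 2:ℂ))
      = -(f*(l 3:ℂ)) := by
    linear_combination hl3 - (l 0:ℂ)*hanti 3 0 - (l 1:ℂ)*sd2 - (l 2:ℂ)*h32 - (l 3:ℂ)*hdiag 3
  -- normalization
  have n3 : -((k 0:ℂ)*(l 0:ℂ)) + (k 1:ℂ)*(l 1:ℂ) + (k 2:ℂ)*(l 2:ℂ) + (k 3:ℂ)*(l 3:ℂ)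
      = -1 := by
    have h : -(k 0 * l 0) + k 1 * l 1 + k 2 * l 2 + k 3 * l 3 = -1 := by
      have h0 := hnorm
      simp [ipR, gminkR, Fin.sum_univ_four] at h0
      linarith
    have h' := congrArg (fun x : ℝ => (x : ℂ)) h
    push_cast at h'
    linear_combination h'
  -- the three key component identities
  have key1 : F 0 1 = f*((k 0:ℂ)*(l 1:ℂ) - (k 1:ℂ)*(l 0:ℂ)
      - Complex.I*((k 2:ℂ)*(l 3:ℂ) - (k 3:ℂ)*(l 2:ℂ))) := by
    linear_combination (-(k 0:ℂ))*M1 + (-(Complex.I*(l 3:ℂ)))*E2 + (Complex.I*(l 2:ℂ))*E3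
      + (-(k 1:ℂ))*M0 + (F 0 1)*n3
      + (-(F 0 1*((l 3:ℂ)*(k 3:ℂ) + (k 2:ℂ)*(l 2:ℂ))) + (k 1:ℂ)*((l 3:ℂ)*F 0 3 + (l 2:ℂ)*F 0 2)) * Complex.I_sq
  have key2 : F 0 2 = f*((k 0:ℂ)*(l 2:ℂ) - (k 2:ℂ)*(l 0:ℂ)
      - Complex.I*((k 3:ℂ)*(l 1:ℂ) - (k 1:ℂ)*(l 3:ℂ))) := by
    linear_combination (-(k 0:ℂ))*M2 + (-(Complex.I*(l 1:ℂ)))*E3 + (Complex.I*(l 3:ℂ))*E1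
      + (-(k 2:ℂ))*M0 + (F 0 2)*n3
      + (-(F 0 2*((l 1:ℂ)*(k 1:ℂ) + (k 3:ℂ)*(l 3:ℂ))) + (k 2:ℂ)*((l 1:ℂ)*F 0 1 + (l 3:ℂ)*F 0 3)) * Complex.I_sq
  have key3 : F 0 3 = f*((k 0:ℂ)*(l 3:ℂ) - (k 3:ℂ)*(l 0:ℂ)
      - Complex.I*((k 1:ℂ)*(l 2:ℂ) - (k 2:ℂ)*(l 1:ℂ))) := by
    linear_combination (-(k 0:ℂ))*M3 + (-(Complex.I*(l 2:ℂ)))*E1 + (Complex.I*(l 1:ℂ))*E2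
      + (-(k 3:ℂ))*M0 + (F 0 3)*n3
      + (-(F 0 3*((l 2:ℂ)*(k 2:ℂ) + (k 1:ℂ)*(l 1:ℂ))) + (k 3:ℂ)*((l 2:ℂ)*F 0 2 + (l 1:ℂ)*F 0 1)) * Complex.I_sq
  -- conclude componentwise
  have t00 : F 0 0 = f * (-((lowR k 0 : ℝ) : ℂ) * ((lowR l 0 : ℝ) : ℂ)
      + ((lowR k 0 : ℝ) : ℂ) * ((lowR l 0 : ℝ) : ℂ)
      - Complex.I * ∑ γ, ∑ δ, ((eps4 0 0 γ δ * k γ * l δ : ℝ) : ℂ)) := by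
    simp only [lowR, gminkR, Fin.sum_univ_four, eps4_eq, epsI,
      show ((0:Fin 4):ℤ) = 0 from rfl, show ((1:Fin 4):ℤ) = 1 from rfl,
      show ((2:Fin 4):ℤ) = 2 from rfl, show ((3:Fin 4):ℤ) = 3 from rfl]
    norm_num
    push_cast
    linear_combination hdiag 0
  have t01 : F 0 1 = f * (-((lowR k 0 : ℝ) : ℂ) * ((lowR l 1 : ℝ) : ℂ)
      + ((lowR k 1 : ℝ) : ℂ) * ((lowR l 0 : ℝ) : ℂ)
      - Complex.I * ∑ γ, ∑ δ, ((eps4 0 1 γ δ * k γ * l δ : ℝ) : ℂ)) := by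
    simp only [lowR, gminkR, Fin.sum_univ_four, eps4_eq, epsI,
      show ((0:Fin 4):ℤ) = 0 from rfl, show ((1:Fin 4):ℤ) = 1 from rfl,
      show ((2:Fin 4):ℤ) = 2 from rfl, show ((3:Fin 4):ℤ) = 3 from rfl]
    norm_num
    push_cast
    linear_combination key1
  have t02 : F 0 2 = f * (-((lowR k 0 : ℝ) : ℂ) * ((lowR l 2 : ℝ) : ℂ)
      + ((lowR k 2 : ℝ) : ℂ) * ((lowR l 0 : ℝ) : ℂ)
      - Complex.I * ∑ γ, ∑ δ, ((eps4 0 2 γ δ * k γ * l δ : ℝ) : ℂ)) := by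
    simp only [lowR, gminkR, Fin.sum_univ_four, eps4_eq, epsI,
      show ((0:Fin 4):ℤ) = 0 from rfl, show ((1:Fin 4):ℤ) = 1 from rfl,
      show ((2:Fin 4):ℤ) = 2 from rfl, show ((3:Fin 4):ℤ) = 3 from rfl]
    norm_num
    push_cast
    linear_combination key2
  have t03 : F 0 3 = f * (-((lowR k 0 : ℝ) : ℂ) * ((lowR l 3 : ℝ) : ℂ)
      + ((lowR k 3 : ℝ) : ℂ) * ((lowR l 0 : ℝ) : ℂ)
      - Complex.I * ∑ γ, ∑ δ, ((eps4 0 3 γ δ * k γ * l δ : ℝ) : ℂ)) := by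
    simp only [lowR, gminkR, Fin.sum_univ_four, eps4_eq, epsI,
      show ((0:Fin 4):ℤ) = 0 from rfl, show ((1:Fin 4):ℤ) = 1 from rfl,
      show ((2:Fin 4):ℤ) = 2 from rfl, show ((3:Fin 4):ℤ) = 3 from rfl]
    norm_num
    push_cast
    linear_combination key3
  have t10 : F 1 0 = f * (-((lowR k 1 : ℝ) : ℂ) * ((lowR l 0 : ℝ) : ℂ)
      + ((lowR k 0 : ℝ) : ℂ) * ((lowR l 1 : ℝ) : ℂ)
      - Complex.I * ∑ γ, ∑ δ, ((eps4 1 0 γ δ * k γ * l δ : ℝ) : ℂ)) := by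
    simp only [lowR, gminkR, Fin.sum_univ_four, eps4_eq, epsI,
      show ((0:Fin 4):ℤ) = 0 from rfl, show ((1:Fin 4):ℤ) = 1 from rfl,
      show ((2:Fin 4):ℤ) = 2 from rfl, show ((3:Fin 4):ℤ) = 3 from rfl]
    norm_num
    push_cast
    linear_combination hanti 1 0 - key1
  have t11 : F 1 1 = f * (-((lowR k 1 : ℝ) : ℂ) * ((lowR l 1 : ℝ) : ℂ)
      + ((lowR k 1 : ℝ) : ℂ) * ((lowR l 1 : ℝ) : ℂ)
      - Complex.I * ∑ γ, ∑ δ, ((eps4 1 1 γ δ * k γ * l δ : ℝ) : ℂ)) := by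
    simp only [lowR, gminkR, Fin.sum_univ_four, eps4_eq, epsI,
      show ((0:Fin 4):ℤ) = 0 from rfl, show ((1:Fin 4):ℤ) = 1 from rfl,
      show ((2:Fin 4):ℤ) = 2 from rfl, show ((3:Fin 4):ℤ) = 3 from rfl]
    norm_num
    push_cast
    linear_combination hdiag 1
  have t12 : F 1 2 = f * (-((lowR k 1 : ℝ) : ℂ) * ((lowR l 2 : ℝ) : ℂ)
      + ((lowR k 2 : ℝ) : ℂ) * ((lowR l 1 : ℝ) : ℂ)
      - Complex.I * ∑ γ, ∑ δ, ((eps4 1 2 γ δ * k γ * l δ : ℝ) : ℂ)) := by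
    simp only [lowR, gminkR, Fin.sum_univ_four, eps4_eq, epsI,
      show ((0:Fin 4):ℤ) = 0 from rfl, show ((1:Fin 4):ℤ) = 1 from rfl,
      show ((2:Fin 4):ℤ) = 2 from rfl, show ((3:Fin 4):ℤ) = 3 from rfl]
    norm_num
    push_cast
    linear_combination sd3 - Complex.I*key3 + (f*((k 1:ℂ)*(l 2:ℂ) - (k 2:ℂ)*(l 1:ℂ)))*Complex.I_sq
  have t13 : F 1 3 = f * (-((lowR k 1 : ℝ) : ℂ) * ((lowR l 3 : ℝ) : ℂ)
      + ((lowR k 3 : ℝ) : ℂ) * ((lowR l 1 : ℝ) : ℂ)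
      - Complex.I * ∑ γ, ∑ δ, ((eps4 1 3 γ δ * k γ * l δ : ℝ) : ℂ)) := by
    simp only [lowR, gminkR, Fin.sum_univ_four, eps4_eq, epsI,
      show ((0:Fin 4):ℤ) = 0 from rfl, show ((1:Fin 4):ℤ) = 1 from rfl,
      show ((2:Fin 4):ℤ) = 2 from rfl, show ((3:Fin 4):ℤ) = 3 from rfl]
    norm_num
    push_cast
    linear_combination h13 + Complex.I*key2 + (f*((k 1:ℂ)*(l 3:ℂ) - (k 3:ℂ)*(l 1:ℂ)))*Complex.I_sq
  have t20 : F 2 0 = f * (-((lowR k 2 : ℝ) : ℂ) * ((lowR l 0 : ℝ) : ℂ)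
      + ((lowR k 0 : ℝ) : ℂ) * ((lowR l 2 : ℝ) : ℂ)
      - Complex.I * ∑ γ, ∑ δ, ((eps4 2 0 γ δ * k γ * l δ : ℝ) : ℂ)) := by
    simp only [lowR, gminkR, Fin.sum_univ_four, eps4_eq, epsI,
      show ((0:Fin 4):ℤ) = 0 from rfl, show ((1:Fin 4):ℤ) = 1 from rfl,
      show ((2:Fin 4):ℤ) = 2 from rfl, show ((3:Fin 4):ℤ) = 3 from rfl]
    norm_num
    push_cast
    linear_combination hanti 2 0 - key2
  have t21 : F 2 1 = f * (-((lowR k 2 : ℝ) : ℂ) * ((lowR l 1 : ℝ) : ℂ)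
      + ((lowR k 1 : ℝ) : ℂ) * ((lowR l 2 : ℝ) : ℂ)
      - Complex.I * ∑ γ, ∑ δ, ((eps4 2 1 γ δ * k γ * l δ : ℝ) : ℂ)) := by
    simp only [lowR, gminkR, Fin.sum_univ_four, eps4_eq, epsI,
      show ((0:Fin 4):ℤ) = 0 from rfl, show ((1:Fin 4):ℤ) = 1 from rfl,
      show ((2:Fin 4):ℤ) = 2 from rfl, show ((3:Fin 4):ℤ) = 3 from rfl]
    norm_num
    push_cast
    linear_combination h21 + Complex.I*key3 + (f*((k 2:ℂ)*(l 1:ℂ) - (k 1:ℂ)*(l 2:ℂ)))*Complex.I_sq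
  have t22 : F 2 2 = f * (-((lowR k 2 : ℝ) : ℂ) * ((lowR l 2 : ℝ) : ℂ)
      + ((lowR k 2 : ℝ) : ℂ) * ((lowR l 2 : ℝ) : ℂ)
      - Complex.I * ∑ γ, ∑ δ, ((eps4 2 2 γ δ * k γ * l δ : ℝ) : ℂ)) := by
    simp only [lowR, gminkR, Fin.sum_univ_four, eps4_eq, epsI,
      show ((0:Fin 4):ℤ) = 0 from rfl, show ((1:Fin 4):ℤ) = 1 from rfl,
      show ((2:Fin 4):ℤ) = 2 from rfl, show ((3:Fin 4):ℤ) = 3 from rfl]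
    norm_num
    push_cast
    linear_combination hdiag 2
  have t23 : F 2 3 = f * (-((lowR k 2 : ℝ) : ℂ) * ((lowR l 3 : ℝ) : ℂ)
      + ((lowR k 3 : ℝ) : ℂ) * ((lowR l 2 : ℝ) : ℂ)
      - Complex.I * ∑ γ, ∑ δ, ((eps4 2 3 γ δ * k γ * l δ : ℝ) : ℂ)) := by
    simp only [lowR, gminkR, Fin.sum_univ_four, eps4_eq, epsI,
      show ((0:Fin 4):ℤ) = 0 from rfl, show ((1:Fin 4):ℤ) = 1 from rfl,
      show ((2:Fin 4):ℤ) = 2 from rfl, show ((3:Fin 4):ℤ) = 3 from rfl]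
    norm_num
    push_cast
    linear_combination sd1 - Complex.I*key1 + (f*((k 2:ℂ)*(l 3:ℂ) - (k 3:ℂ)*(l 2:ℂ)))*Complex.I_sq
  have t30 : F 3 0 = f * (-((lowR k 3 : ℝ) : ℂ) * ((lowR l 0 : ℝ) : ℂ)
      + ((lowR k 0 : ℝ) : ℂ) * ((lowR l 3 : ℝ) : ℂ)
      - Complex.I * ∑ γ, ∑ δ, ((eps4 3 0 γ δ * k γ * l δ : ℝ) : ℂ)) := by
    simp only [lowR, gminkR, Fin.sum_univ_four, eps4_eq, epsI,
      show ((0:Fin 4):ℤ) = 0 from rfl, show ((1:Fin 4):ℤ) = 1 from rfl,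
      show ((2:Fin 4):ℤ) = 2 from rfl, show ((3:Fin 4):ℤ) = 3 from rfl]
    norm_num
    push_cast
    linear_combination hanti 3 0 - key3
  have t31 : F 3 1 = f * (-((lowR k 3 : ℝ) : ℂ) * ((lowR l 1 : ℝ) : ℂ)
      + ((lowR k 1 : ℝ) : ℂ) * ((lowR l 3 : ℝ) : ℂ)
      - Complex.I * ∑ γ, ∑ δ, ((eps4 3 1 γ δ * k γ * l δ : ℝ) : ℂ)) := by
    simp only [lowR, gminkR, Fin.sum_univ_four, eps4_eq, epsI,
      show ((0:Fin 4):ℤ) = 0 from rfl, show ((1:Fin 4):ℤ) = 1 from rfl,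
      show ((2:Fin 4):ℤ) = 2 from rfl, show ((3:Fin 4):ℤ) = 3 from rfl]
    norm_num
    push_cast
    linear_combination sd2 - Complex.I*key2 + (f*((k 3:ℂ)*(l 1:ℂ) - (k 1:ℂ)*(l 3:ℂ)))*Complex.I_sq
  have t32 : F 3 2 = f * (-((lowR k 3 : ℝ) : ℂ) * ((lowR l 2 : ℝ) : ℂ)
      + ((lowR k 2 : ℝ) : ℂ) * ((lowR l 3 : ℝ) : ℂ)
      - Complex.I * ∑ γ, ∑ δ, ((eps4 3 2 γ δ * k γ * l δ : ℝ) : ℂ)) := by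
    simp only [lowR, gminkR, Fin.sum_univ_four, eps4_eq, epsI,
      show ((0:Fin 4):ℤ) = 0 from rfl, show ((1:Fin 4):ℤ) = 1 from rfl,
      show ((2:Fin 4):ℤ) = 2 from rfl, show ((3:Fin 4):ℤ) = 3 from rfl]
    norm_num
    push_cast
    linear_combination h32 + Complex.I*key1 + (f*((k 3:ℂ)*(l 2:ℂ) - (k 2:ℂ)*(l 3:ℂ)))*Complex.I_sq
  have t33 : F 3 3 = f * (-((lowR k 3 : ℝ) : ℂ) * ((lowR l 3 : ℝ) : ℂ)
      + ((lowR k 3 : ℝ) : ℂ) * ((lowR l 3 : ℝ) : ℂ)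
      - Complex.I * ∑ γ, ∑ δ, ((eps4 3 3 γ δ * k γ * l δ : ℝ) : ℂ)) := by
    simp only [lowR, gminkR, Fin.sum_univ_four, eps4_eq, epsI,
      show ((0:Fin 4):ℤ) = 0 from rfl, show ((1:Fin 4):ℤ) = 1 from rfl,
      show ((2:Fin 4):ℤ) = 2 from rfl, show ((3:Fin 4):ℤ) = 3 from rfl]
    norm_num
    push_cast
    linear_combination hdiag 3
  intro α β
  fin_cases α <;> fin_cases β <;> assumption
end
end
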